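/- Let α, β ∈ (0,π) and φ, ξ ∈ [0,2π), and define u₀, u₁, v₀, v₁ ∈ ℂ² and the unit vector ψ_Hardy ∈ ℂ²⊗ℂ² as follows: u₀ = C_α|0⟩ + e^{iφ}S_α|1⟩, u₁ = −S_α|0⟩ + e^{iφ}C_α|1⟩, v₀ = C_β|0⟩ + e^{iξ}S_β|1⟩, v₁ = −S_β|0⟩ + e^{iξ}C_β|1⟩, and ψ_Hardy := (T_α·u₀⊗v₁ + T_β·u₁⊗v₀ + u₁⊗v₁)/√(1+T_α²+T_β²). If ρ is a positive semidefinite operator on ℂ²⊗ℂ² with trace 1 satisfying ⟨|0⟩⊗v₁, ρ(|0⟩⊗v₁)⟩ = 0, ⟨u₁⊗|0⟩, ρ(u₁⊗|0⟩)⟩ = 0, and ⟨u₀⊗v₀, ρ(u₀⊗v₀)⟩ = 0, then ρ is the rank-one orthogonal projection onto the line spanned by ψ_Hardy. -/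

import Mathlib

open Real Complex Matrix ComplexOrder

noncomputable section

/-- Computational basis vector `|0⟩` of a qubit. -/
def ket0 : Fin 2 → ℂ := fun i => if i = 0 then 1 else 0

/-- Computational basis vector `|1⟩` of a qubit. -/
def ket1 : Fin 2 → ℂ := fun i => if i = 1 then 1 else 0

/-- Tensor product of two qubit vectors, as a vector in `ℂ²⊗ℂ² ≅ ℂ⁴`. -/
def tensor (u v : Fin 2 → ℂ) : Fin 2 × Fin 2 → ℂ := fun p => u p.1 * v p.2

lemma tdot (a b c d : Fin 2 → ℂ) :
    star (tensor a b) ⬝ᵥ tensor c d = (star a ⬝ᵥ c) * (star b ⬝ᵥ d) := by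
  simp [tensor, dotProduct, Fintype.sum_prod_type, Fin.sum_univ_two]; ring

lemma dconj {n : Type*} [Fintype n] (x y : n → ℂ) :
    star x ⬝ᵥ y = starRingEnd ℂ (star y ⬝ᵥ x) := by
  simp [dotProduct, map_sum, mul_comm]

lemma qdots (θ ω : ℝ) :
    star ((Real.cos θ : ℂ) • ket0 + (Complex.exp (Complex.I * ω) * Real.sin θ) • ket1) ⬝ᵥ
      ((-(Real.sin θ : ℂ)) • ket0 + (Complex.exp (Complex.I * ω) * Real.cos θ) • ket1) = 0
    ∧ star ((Real.cos θ : ℂ) • ket0 + (Complex.exp (Complex.I * ω) * Real.sin θ) • ket1) ⬝ᵥ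
      ((Real.cos θ : ℂ) • ket0 + (Complex.exp (Complex.I * ω) * Real.sin θ) • ket1) = 1
    ∧ star ((-(Real.sin θ : ℂ)) • ket0 + (Complex.exp (Complex.I * ω) * Real.cos θ) • ket1) ⬝ᵥ
      ((-(Real.sin θ : ℂ)) • ket0 + (Complex.exp (Complex.I * ω) * Real.cos θ) • ket1) = 1
    ∧ star ((-(Real.sin θ : ℂ)) • ket0 + (Complex.exp (Complex.I * ω) * Real.cos θ) • ket1) ⬝ᵥ
      ((Real.cos θ : ℂ) • ket0 + (Complex.exp (Complex.I * ω) * Real.sin θ) • ket1) = 0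
    ∧ star ((Real.cos θ : ℂ) • ket0 + (Complex.exp (Complex.I * ω) * Real.sin θ) • ket1) ⬝ᵥ ket0
      = (Real.cos θ : ℂ)
    ∧ star ((-(Real.sin θ : ℂ)) • ket0 + (Complex.exp (Complex.I * ω) * Real.cos θ) • ket1) ⬝ᵥ ket0
      = -(Real.sin θ : ℂ)
    ∧ star ket0 ⬝ᵥ ((-(Real.sin θ : ℂ)) • ket0 + (Complex.exp (Complex.I * ω) * Real.cos θ) • ket1)
      = -(Real.sin θ : ℂ)
    ∧ star ket0 ⬝ᵥ (ket0 : Fin 2 → ℂ) = 1 := by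
  have hE : Complex.exp (Complex.I * ω) * Complex.exp (-Complex.I * ω) = 1 := by
    rw [← Complex.exp_add]; ring_nf; exact Complex.exp_zero
  have hsc : (Complex.sin θ)^2 + (Complex.cos θ)^2 = 1 := Complex.sin_sq_add_cos_sq _
  refine ⟨?_, ?_, ?_, ?_, ?_, ?_, ?_, ?_⟩ <;>
  · simp only [dotProduct, Fin.sum_univ_two, Pi.star_apply, Pi.add_apply, Pi.smul_apply,
      ket0, ket1, smul_eq_mul]
    norm_num
    try simp only [_root_.map_mul, ← Complex.exp_conj, map_neg, Complex.conj_I,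
      Complex.conj_ofReal, ← Complex.cos_conj, ← Complex.sin_conj]
    try linear_combination (Complex.sin θ * Complex.cos θ) * hE
    try linear_combination (Complex.sin θ)^2 * hE + hsc
    try linear_combination (Complex.cos θ)^2 * hE + hsc
    try linear_combination (-(Complex.sin θ) * Complex.cos θ) * hE

lemma vecMulVec_mulVec' {n : Type*} [Fintype n] (w u x : n → ℂ) :
    Matrix.vecMulVec w u *ᵥ x = (u ⬝ᵥ x) • w := by
  funext i
  simp only [Matrix.vecMulVec_apply, Matrix.mulVec, dotProduct, Pi.smul_apply, smul_eq_mul,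
    Finset.sum_mul]
  exact Finset.sum_congr rfl fun j _ => by ring

lemma mat_eq_zero {n : Type*} [Fintype n] [DecidableEq n]
    (M : Matrix n n ℂ) (v : Fin 4 → (n → ℂ))
    (hspan : Submodule.span ℂ (Set.range v) = ⊤)
    (h : ∀ i j, star (v i) ⬝ᵥ M *ᵥ v j = 0) : M = 0 := by
  have h1 : ∀ i, ∀ y, star (v i) ⬝ᵥ M *ᵥ y = 0 := by
    intro i y
    have hy : y ∈ Submodule.span ℂ (Set.range v) := hspan ▸ Submodule.mem_top
    induction hy using Submodule.span_induction with
    | mem x hx => obtain ⟨j, rfl⟩ := hx; exact h i j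
    | zero => simp
    | add x y _ _ hx hy => rw [Matrix.mulVec_add, dotProduct_add, hx, hy, add_zero]
    | smul c x _ hx => rw [Matrix.mulVec_smul, dotProduct_smul, hx, smul_zero]
  have h2 : ∀ y, M *ᵥ y = 0 := by
    intro y
    have h3 : ∀ x, star x ⬝ᵥ (M *ᵥ y) = 0 := by
      intro x
      have hx : x ∈ Submodule.span ℂ (Set.range v) := hspan ▸ Submodule.mem_top
      induction hx using Submodule.span_induction with
      | mem x hx => obtain ⟨j, rfl⟩ := hx; exact h1 j y
      | zero => simp
      | add a b _ _ ha hb => rw [star_add, add_dotProduct, ha, hb, add_zero]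
      | smul c a _ ha => rw [star_smul, smul_dotProduct, ha, smul_zero]
    exact dotProduct_star_self_eq_zero.mp (h3 (M *ᵥ y))
  ext i j
  have := congrFun (h2 (Pi.single j 1)) i
  simpa [Matrix.mulVec, dotProduct, Pi.single_apply] using this

theorem hardy_state_selftest_two_qubit
    (α β φ ξ : ℝ) (hα : α ∈ Set.Ioo 0 π) (hβ : β ∈ Set.Ioo 0 π)
    (hφ : φ ∈ Set.Ico 0 (2 * π)) (hξ : ξ ∈ Set.Ico 0 (2 * π))
    (u0 u1 v0 v1 : Fin 2 → ℂ)
    (hu0 : u0 = (Real.cos (α / 2) : ℂ) • ket0 + (Complex.exp (Complex.I * φ) * Real.sin (α / 2)) • ket1)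
    (hu1 : u1 = (-(Real.sin (α / 2) : ℂ)) • ket0 + (Complex.exp (Complex.I * φ) * Real.cos (α / 2)) • ket1)
    (hv0 : v0 = (Real.cos (β / 2) : ℂ) • ket0 + (Complex.exp (Complex.I * ξ) * Real.sin (β / 2)) • ket1)
    (hv1 : v1 = (-(Real.sin (β / 2) : ℂ)) • ket0 + (Complex.exp (Complex.I * ξ) * Real.cos (β / 2)) • ket1)
    (ψ : Fin 2 × Fin 2 → ℂ)
    (hψ : ψ = ((Real.sqrt (1 + Real.tan (α / 2) ^ 2 + Real.tan (β / 2) ^ 2) : ℂ))⁻¹ •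
        ((Real.tan (α / 2) : ℂ) • tensor u0 v1 + (Real.tan (β / 2) : ℂ) • tensor u1 v0 +
          tensor u1 v1))
    (ρ : Matrix (Fin 2 × Fin 2) (Fin 2 × Fin 2) ℂ)
    (hρ : ρ.PosSemidef) (hρtr : ρ.trace = 1)
    (h1 : star (tensor ket0 v1) ⬝ᵥ ρ *ᵥ tensor ket0 v1 = 0)
    (h2 : star (tensor u1 ket0) ⬝ᵥ ρ *ᵥ tensor u1 ket0 = 0)
    (h3 : star (tensor u0 v0) ⬝ᵥ ρ *ᵥ tensor u0 v0 = 0) :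
    ρ = Matrix.vecMulVec ψ (star ψ) := by
  obtain ⟨hα0, hαπ⟩ := hα
  obtain ⟨hβ0, hβπ⟩ := hβ
  -- basic positivity facts
  have hca : 0 < Real.cos (α / 2) :=
    Real.cos_pos_of_mem_Ioo ⟨by linarith [Real.pi_pos], by linarith⟩
  have hcb : 0 < Real.cos (β / 2) :=
    Real.cos_pos_of_mem_Ioo ⟨by linarith [Real.pi_pos], by linarith⟩
  have hsa : 0 < Real.sin (α / 2) := Real.sin_pos_of_pos_of_lt_pi (by linarith)
    (by linarith [Real.pi_pos])
  have hsb : 0 < Real.sin (β / 2) := Real.sin_pos_of_pos_of_lt_pi (by linarith)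
    (by linarith [Real.pi_pos])
  -- qubit dot products
  obtain ⟨du01, du00, du11, du10, du0k, du1k, dku1, dkk⟩ := qdots (α / 2) φ
  simp only [← hu0, ← hu1] at du01 du00 du11 du10 du0k du1k dku1
  obtain ⟨dv01, dv00, dv11, dv10, dv0k, dv1k, dkv1, _⟩ := qdots (β / 2) ξ
  simp only [← hv0, ← hv1] at dv01 dv00 dv11 dv10 dv0k dv1k dkv1
  have hfact : (1 : ℂ) - ((Real.sin (α/2) : ℂ) * (Real.sin (β/2) : ℂ))^2 ≠ 0 := by
    have hs1 : Real.sin (α/2)^2 < 1 := by nlinarith [Real.sin_sq_add_cos_sq (α/2), hca]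
    have hs2 : Real.sin (β/2)^2 < 1 := by nlinarith [Real.sin_sq_add_cos_sq (β/2), hcb]
    have hr : (0:ℝ) < 1 - (Real.sin (α/2) * Real.sin (β/2))^2 := by
      nlinarith [sq_nonneg (Real.sin (α/2)), sq_nonneg (Real.sin (β/2))]
    rw [show (1:ℂ) - ((Real.sin (α/2):ℂ) * (Real.sin (β/2):ℂ))^2
        = ((1 - (Real.sin (α/2) * Real.sin (β/2))^2 : ℝ) : ℂ) by push_cast; ring]
    exact_mod_cast hr.ne'
  -- notation
  set sA : ℂ := (Real.sin (α / 2) : ℂ) with hsA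
  set cA : ℂ := (Real.cos (α / 2) : ℂ) with hcA
  set sB : ℂ := (Real.sin (β / 2) : ℂ) with hsB
  set cB : ℂ := (Real.cos (β / 2) : ℂ) with hcB
  set tA : ℂ := (Real.tan (α / 2) : ℂ) with htA
  set tB : ℂ := (Real.tan (β / 2) : ℂ) with htB
  set n : ℂ := ((Real.sqrt (1 + Real.tan (α / 2) ^ 2 + Real.tan (β / 2) ^ 2) : ℝ) : ℂ) with hn
  set w1 := tensor ket0 v1 with hw1
  set w2 := tensor u1 ket0 with hw2
  set w3 := tensor u0 v0 with hw3
  have htAc : tA * cA = sA := by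
    rw [htA, hcA, hsA]
    norm_cast
    rw [Real.tan_eq_sin_div_cos]
    field_simp
  have htBc : tB * cB = sB := by
    rw [htB, hcB, hsB]
    norm_cast
    rw [Real.tan_eq_sin_div_cos]
    field_simp
  have hXpos : (0:ℝ) < 1 + Real.tan (α / 2) ^ 2 + Real.tan (β / 2) ^ 2 := by positivity
  have hn2 : n ^ 2 = 1 + tA ^ 2 + tB ^ 2 := by
    rw [hn, htA, htB]
    norm_cast
    exact Real.sq_sqrt hXpos.le
  have hn0 : n ≠ 0 := by
    rw [hn]
    norm_cast
    exact (Real.sqrt_pos.mpr hXpos).ne'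
  -- ρ kills the three vectors
  have hρw1 : ρ *ᵥ w1 = 0 := (hρ.dotProduct_mulVec_zero_iff w1).mp h1
  have hρw2 : ρ *ᵥ w2 = 0 := (hρ.dotProduct_mulVec_zero_iff w2).mp h2
  have hρw3 : ρ *ᵥ w3 = 0 := (hρ.dotProduct_mulVec_zero_iff w3).mp h3
  have hw1ρ : star w1 ᵥ* ρ = 0 := by
    have h := congrArg star hρw1
    rwa [Matrix.star_mulVec, hρ.1.eq, star_zero] at h
  have hw2ρ : star w2 ᵥ* ρ = 0 := by
    have h := congrArg star hρw2
    rwa [Matrix.star_mulVec, hρ.1.eq, star_zero] at h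
  have hw3ρ : star w3 ᵥ* ρ = 0 := by
    have h := congrArg star hρw3
    rwa [Matrix.star_mulVec, hρ.1.eq, star_zero] at h
  -- ψ dot products
  have hψdot : ∀ x : Fin 2 × Fin 2 → ℂ, star ψ ⬝ᵥ x
      = n⁻¹ * (tA * (star (tensor u0 v1) ⬝ᵥ x) + tB * (star (tensor u1 v0) ⬝ᵥ x)
          + star (tensor u1 v1) ⬝ᵥ x) := by
    intro x
    rw [hψ]
    simp only [star_smul, star_add, smul_dotProduct, add_dotProduct, smul_eq_mul]
    have h1 : star n⁻¹ = n⁻¹ := by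
      rw [hn, ← Complex.ofReal_inv]; exact Complex.conj_ofReal _
    have h2 : star tA = tA := by rw [htA]; exact Complex.conj_ofReal _
    have h3 : star tB = tB := by rw [htB]; exact Complex.conj_ofReal _
    rw [h1, h2, h3]
    try ring
  have dpw1 : star ψ ⬝ᵥ w1 = 0 := by
    rw [hψdot, hw1, tdot, tdot, tdot, du0k, du1k, dv11, dv01]
    linear_combination n⁻¹ * htAc
  have dpw2 : star ψ ⬝ᵥ w2 = 0 := by
    rw [hψdot, hw2, tdot, tdot, tdot, du01, du11, dv1k, dv0k]
    linear_combination n⁻¹ * htBc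
  have dpw3 : star ψ ⬝ᵥ w3 = 0 := by
    rw [hψdot, hw3, tdot, tdot, tdot, du00, du10, dv10]
    try ring
  have dpψ : star ψ ⬝ᵥ ψ = 1 := by
    rw [hψdot, hψ]
    simp only [smul_add, dotProduct_smul, dotProduct_add, tdot, du00, du01, du10, du11,
      dv00, dv01, dv10, dv11, smul_eq_mul]
    field_simp
    linear_combination (-1:ℂ) * hn2
  -- Gram entries
  have g11 : star w1 ⬝ᵥ w1 = 1 := by rw [hw1, tdot, dkk, dv11]; try ring
  have g12 : star w1 ⬝ᵥ w2 = sA * sB := by rw [hw1, hw2, tdot, dku1, dv1k]; try ring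
  have g13 : star w1 ⬝ᵥ w3 = 0 := by rw [hw1, hw3, tdot, dv10]; try ring
  have g21 : star w2 ⬝ᵥ w1 = sA * sB := by rw [hw1, hw2, tdot, du1k, dkv1]; try ring
  have g22 : star w2 ⬝ᵥ w2 = 1 := by rw [hw2, tdot, du11, dkk]; try ring
  have g23 : star w2 ⬝ᵥ w3 = 0 := by rw [hw2, hw3, tdot, du10]; try ring
  have g31 : star w3 ⬝ᵥ w1 = 0 := by rw [hw1, hw3, tdot, dv01]; try ring
  have g32 : star w3 ⬝ᵥ w2 = 0 := by rw [hw2, hw3, tdot, du01]; try ring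
  have g33 : star w3 ⬝ᵥ w3 = 1 := by rw [hw3, tdot, du00, dv00]; try ring
  have gψ1 : star w1 ⬝ᵥ ψ = 0 := by rw [dconj, dpw1, map_zero]
  have gψ2 : star w2 ⬝ᵥ ψ = 0 := by rw [dconj, dpw2, map_zero]
  have gψ3 : star w3 ⬝ᵥ ψ = 0 := by rw [dconj, dpw3, map_zero]
  -- the four vectors form a basis
  set v : Fin 4 → (Fin 2 × Fin 2 → ℂ) := ![w1, w2, w3, ψ] with hv
  have hli : LinearIndependent ℂ v := by
    rw [Fintype.linearIndependent_iff]
    intro g hg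
    have hd : ∀ x : Fin 2 × Fin 2 → ℂ, star x ⬝ᵥ (∑ i, g i • v i) = 0 := by
      intro x; rw [hg, dotProduct_zero]
    have e1 := hd w1
    have e2 := hd w2
    have e3 := hd w3
    have e4 := hd ψ
    simp only [Fin.sum_univ_four, hv, Matrix.cons_val_zero, Matrix.cons_val_one,
      Matrix.head_cons, Matrix.cons_val_two, Matrix.tail_cons, Matrix.cons_val_three,
      dotProduct_add, dotProduct_smul, smul_eq_mul] at e1 e2 e3 e4
    rw [g11, g12, g13, gψ1] at e1
    rw [g21, g22, g23, gψ2] at e2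
    rw [g31, g32, g33, gψ3] at e3
    rw [dpw1, dpw2, dpw3, dpψ] at e4
    have hg2 : g 2 = 0 := by linear_combination e3
    have hg3 : g 3 = 0 := by linear_combination e4
    have h0 : ((1:ℂ) - (sA*sB)^2) * g 0 = 0 := by linear_combination e1 - (sA*sB) * e2
    have hg0 : g 0 = 0 := by
      rcases mul_eq_zero.mp h0 with h | h
      · exact absurd h hfact
      · exact h
    have hg1 : g 1 = 0 := by linear_combination e2 - (sA*sB) * hg0
    intro i; fin_cases i <;> assumption
  have hcard : Fintype.card (Fin 4) = Module.finrank ℂ (Fin 2 × Fin 2 → ℂ) := by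
    simp [Module.finrank_fintype_fun_eq_card]
  have hspan : Submodule.span ℂ (Set.range v) = ⊤ :=
    hli.span_eq_top_of_card_eq_finrank hcard
  -- conclude
  set t : ℂ := star ψ ⬝ᵥ ρ *ᵥ ψ with ht
  have hv0 : v 0 = w1 := rfl
  have hv1' : v 1 = w2 := rfl
  have hv2 : v 2 = w3 := rfl
  have hv3 : v 3 = ψ := rfl
  have hMz : ρ - t • Matrix.vecMulVec ψ (star ψ) = 0 := by
    apply mat_eq_zero _ v hspan
    intro i j
    rw [Matrix.sub_mulVec, dotProduct_sub, Matrix.smul_mulVec, vecMulVec_mulVec']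
    fin_cases j
    · show star (v i) ⬝ᵥ ρ *ᵥ w1 - star (v i) ⬝ᵥ t • (star ψ ⬝ᵥ w1) • ψ = 0
      rw [hρw1, dpw1]; simp
    · show star (v i) ⬝ᵥ ρ *ᵥ w2 - star (v i) ⬝ᵥ t • (star ψ ⬝ᵥ w2) • ψ = 0
      rw [hρw2, dpw2]; simp
    · show star (v i) ⬝ᵥ ρ *ᵥ w3 - star (v i) ⬝ᵥ t • (star ψ ⬝ᵥ w3) • ψ = 0
      rw [hρw3, dpw3]; simp
    · show star (v i) ⬝ᵥ ρ *ᵥ ψ - star (v i) ⬝ᵥ t • (star ψ ⬝ᵥ ψ) • ψ = 0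
      rw [dpψ, one_smul]
      fin_cases i
      · show star w1 ⬝ᵥ ρ *ᵥ ψ - star w1 ⬝ᵥ t • ψ = 0
        rw [Matrix.dotProduct_mulVec, hw1ρ, zero_dotProduct, dotProduct_smul, gψ1]
        simp
      · show star w2 ⬝ᵥ ρ *ᵥ ψ - star w2 ⬝ᵥ t • ψ = 0
        rw [Matrix.dotProduct_mulVec, hw2ρ, zero_dotProduct, dotProduct_smul, gψ2]
        simp
      · show star w3 ⬝ᵥ ρ *ᵥ ψ - star w3 ⬝ᵥ t • ψ = 0
        rw [Matrix.dotProduct_mulVec, hw3ρ, zero_dotProduct, dotProduct_smul, gψ3]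
        simp
      · show star ψ ⬝ᵥ ρ *ᵥ ψ - star ψ ⬝ᵥ t • ψ = 0
        rw [dotProduct_smul, dpψ]
        simp [ht]
  have hρ_eq : ρ = t • Matrix.vecMulVec ψ (star ψ) := sub_eq_zero.mp hMz
  have htr1 : Matrix.trace (Matrix.vecMulVec ψ (star ψ)) = 1 := by
    have htr : Matrix.trace (Matrix.vecMulVec ψ (star ψ)) = star ψ ⬝ᵥ ψ := by
      simp [Matrix.trace, Matrix.diag, Matrix.vecMulVec_apply, dotProduct, mul_comm]
    rw [htr, dpψ]
  have ht1 : t = 1 := by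
    have h := hρtr
    rw [hρ_eq, Matrix.trace_smul, htr1, smul_eq_mul, mul_one] at h
    exact h
  rw [hρ_eq, ht1, one_smul]


end
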